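/- If topological spaces X and Y are connected by projections and twists, then the Loday functors 𝓛_{C(X)} and 𝓛_{C(Y)} are isomorphic as functors from the category Ω of finite nonempty sets and surjections to ℂ-vector spaces. Explicitly, the maps Φ_r = T̄_{r+1}^{(r)} : C(X)^{⊗r} → C(Y)^{⊗r} and Ψ_r = T_{r+1}^{(r)} : C(Y)^{⊗r} → C(X)^{⊗r} form mutually inverse natural transformations. -/

import Mathlib

open scoped TensorProduct Classical

noncomputable section

/-- The ℂ-linear span `⟨Y^X⟩` of the set of continuous maps `X → Y` (ensembles). -/
abbrev Ens (X Y : Type) [TopologicalSpace X] [TopologicalSpace Y] : Type :=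
  C(X, Y) →₀ ℂ

variable {X Y W : Type} [TopologicalSpace X] [TopologicalSpace Y] [TopologicalSpace W]

/-- The bilinear extension of composition of maps to ensembles. -/
def Ens.comp (B : Ens Y W) (A : Ens X Y) : Ens X W :=
  B.sum fun b v => A.sum fun a u => Finsupp.single (b.comp a) (v * u)

/-- The identity map `1` as an ensemble. -/
def Ens.one (X : Type) [TopologicalSpace X] : Ens X X :=
  Finsupp.single (ContinuousMap.id X) 1

/-- A single continuous map viewed as an ensemble. -/
def Ens.of (a : C(X, Y)) : Ens X Y := Finsupp.single a 1

/-- The multilinear map underlying `A^{(r)}`, sending `(f₁,…,f_r)` to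
`Σᵢ uᵢ (f₁∘aᵢ)⊗⋯⊗(f_r∘aᵢ)`. -/
def Ens.applM (A : Ens X Y) (r : ℕ) :
    MultilinearMap ℂ (fun _ : Fin r => C(Y, ℂ)) (⨂[ℂ] _ : Fin r, C(X, ℂ)) :=
  A.sum fun a u =>
    u • (PiTensorProduct.tprod ℂ (s := fun _ : Fin r => C(X, ℂ))).compLinearMap
      (fun _ => (ContinuousMap.compRightAlgHom ℂ ℂ a).toLinearMap)

/-- The induced linear map `A^{(r)} : C(Y)^{⊗r} → C(X)^{⊗r}`. -/
def Ens.applL (A : Ens X Y) (r : ℕ) :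
    (⨂[ℂ] _ : Fin r, C(Y, ℂ)) →ₗ[ℂ] ⨂[ℂ] _ : Fin r, C(X, ℂ) :=
  PiTensorProduct.lift (A.applM r)

/-- The restriction `A|_T` of an ensemble to a subset `T ⊆ X`, as an element of the
free ℂ-vector space on the set of maps `T → Y`. -/
def Ens.restr (A : Ens X Y) (T : Set X) : (T → Y) →₀ ℂ :=
  A.sum fun a u => Finsupp.single (fun t : T => a t) u

/-- The ensemble `Zₙ = Π_{i=1}^{n}(1 − pᵢ)` built from a sequence of self-maps. -/
def Ens.Z (p : ℕ → C(X, X)) (n : ℕ) : Ens X X :=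
  ((List.range n).map (fun i => Ens.one X - Ens.of (p (i + 1)))).foldr Ens.comp (Ens.one X)

/-- The ensemble `Tₙ = Σ_{i=1}^{n} Z̄_{i−1} hᵢ`. -/
def Ens.T (q : ℕ → C(Y, Y)) (h : ℕ → C(X, Y)) (n : ℕ) : Ens X Y :=
  ∑ i ∈ Finset.range n, Ens.comp (Ens.Z q i) (Ens.of (h (i + 1)))

/-- A set of projections and twists connecting topological spaces `X` and `Y`. -/
structure ProjTwist (X Y : Type) [TopologicalSpace X] [TopologicalSpace Y] where
  p : ℕ → C(X, X)
  q : ℕ → C(Y, Y)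
  h : ℕ → C(X, Y)
  hb : ℕ → C(Y, X)
  p_idem : ∀ n, (p n).comp (p n) = p n
  p_comm : ∀ i j, (p i).comp (p j) = (p j).comp (p i)
  q_idem : ∀ n, (q n).comp (q n) = q n
  q_comm : ∀ i j, (q i).comp (q j) = (q j).comp (q i)
  p_mov : ∀ i j, i ≠ j → Disjoint {x | p i x ≠ x} {x | p j x ≠ x}
  q_mov : ∀ i j, i ≠ j → Disjoint {y | q i y ≠ y} {y | q j y ≠ y}
  qh : ∀ i j, (q j).comp (h i) = (h i).comp (p j)
  phb : ∀ i j, (p j).comp (hb i) = (hb i).comp (q j)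
  hbh : ∀ i j, (hb j).comp (h i) = (p j).comp (p i)
  hhb : ∀ i j, (h i).comp (hb j) = (q i).comp (q j)


/-- The multilinear map underlying the Loday structure map `σ*` for a map
`σ : ⟨r⟩ → ⟨s⟩`: it sends `(f₁,…,f_r)` to `g₁⊗⋯⊗g_s` with `gⱼ = Π_{i∈σ⁻¹(j)} fᵢ`. -/
def lodayMl (B : Type) [CommRing B] [Algebra ℂ B] {r s : ℕ} (σ : Fin r → Fin s) :
    MultilinearMap ℂ (fun _ : Fin r => B) (⨂[ℂ] _ : Fin s, B) where
  toFun f := PiTensorProduct.tprod ℂ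
    (fun j => ∏ i ∈ Finset.univ.filter (fun i => σ i = j), f i)
  map_update_add' := by
    intro _ f i x y
    have key : ∀ z : B,
        (fun j => ∏ i' ∈ Finset.univ.filter (fun i' => σ i' = j), Function.update f i z i') =
          Function.update (fun j => ∏ i' ∈ Finset.univ.filter (fun i' => σ i' = j), f i')
            (σ i) (z * ∏ i' ∈ (Finset.univ.filter (fun i' => σ i' = σ i)).erase i, f i') := by
      intro z
      funext j
      by_cases hj : j = σ i
      · subst hj
        rw [Function.update_self]
        have hi : i ∈ Finset.univ.filter (fun i' => σ i' = σ i) := by simp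
        rw [← Finset.mul_prod_erase _ _ hi, Function.update_self]
        congr 1
        exact Finset.prod_congr rfl fun i' hi' =>
          Function.update_of_ne (Finset.ne_of_mem_erase hi') _ _
      · rw [Function.update_of_ne hj]
        exact Finset.prod_congr rfl fun i' hi' => by
          have : i' ≠ i := fun e => hj (by simpa [e] using ((Finset.mem_filter.mp hi').2).symm)
          exact Function.update_of_ne this _ _
    simp only [key, add_mul]
    exact (PiTensorProduct.tprod ℂ).map_update_add _ _ _ _
  map_update_smul' := by
    intro _ f i c x
    have key : ∀ z : B,
        (fun j => ∏ i' ∈ Finset.univ.filter (fun i' => σ i' = j), Function.update f i z i') =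
          Function.update (fun j => ∏ i' ∈ Finset.univ.filter (fun i' => σ i' = j), f i')
            (σ i) (z * ∏ i' ∈ (Finset.univ.filter (fun i' => σ i' = σ i)).erase i, f i') := by
      intro z
      funext j
      by_cases hj : j = σ i
      · subst hj
        rw [Function.update_self]
        have hi : i ∈ Finset.univ.filter (fun i' => σ i' = σ i) := by simp
        rw [← Finset.mul_prod_erase _ _ hi, Function.update_self]
        congr 1
        exact Finset.prod_congr rfl fun i' hi' =>
          Function.update_of_ne (Finset.ne_of_mem_erase hi') _ _
      · rw [Function.update_of_ne hj]
        exact Finset.prod_congr rfl fun i' hi' => by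
          have : i' ≠ i := fun e => hj (by simpa [e] using ((Finset.mem_filter.mp hi').2).symm)
          exact Function.update_of_ne this _ _
    simp only [key, smul_mul_assoc]
    exact (PiTensorProduct.tprod ℂ).map_update_smul _ _ _ _

/-- The Loday structure map `σ* : B^{⊗r} → B^{⊗s}`. -/
def lodayL (B : Type) [CommRing B] [Algebra ℂ B] {r s : ℕ} (σ : Fin r → Fin s) :
    (⨂[ℂ] _ : Fin r, B) →ₗ[ℂ] ⨂[ℂ] _ : Fin s, B :=
  PiTensorProduct.lift (lodayMl B σ)

set_option maxHeartbeats 1000000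
set_option synthInstance.maxHeartbeats 400000

/-- Shortcut instance to avoid typeclass search timeouts. -/
noncomputable instance tensorAddCommGroup (X : Type) [TopologicalSpace X] (r : ℕ) :
    AddCommGroup (⨂[ℂ] _ : Fin r, C(X, ℂ)) := by
  set_option synthInstance.maxHeartbeats 2000000 in infer_instance

namespace Ens

variable {X Y W : Type} [TopologicalSpace X] [TopologicalSpace Y] [TopologicalSpace W]

theorem applL_tprod (A : Ens X Y) (r : ℕ) (f : Fin r → C(Y, ℂ)) :
    A.applL r (PiTensorProduct.tprod ℂ f) =
      A.sum fun a u => u • PiTensorProduct.tprod ℂ (fun i => (f i).comp a) := by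
  rw [Ens.applL, PiTensorProduct.lift.tprod, Ens.applM, Finsupp.sum, Finsupp.sum,
    MultilinearMap.sum_apply]
  refine Finset.sum_congr rfl fun a _ => ?_
  simp [ContinuousMap.compRightAlgHom_apply]

theorem applL_add (A B : Ens X Y) (r : ℕ) :
    (A + B).applL r = A.applL r + B.applL r := by
  apply PiTensorProduct.ext
  ext f
  simp only [LinearMap.compMultilinearMap_apply, LinearMap.add_apply, applL_tprod]
  rw [Finsupp.sum_add_index' (fun a => by simp) (fun a u v => by rw [add_smul])]

theorem applL_smul (c : ℂ) (A : Ens X Y) (r : ℕ) :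
    (c • A).applL r = c • A.applL r := by
  apply PiTensorProduct.ext
  ext f
  simp only [LinearMap.compMultilinearMap_apply, LinearMap.smul_apply, applL_tprod]
  rw [Finsupp.sum_smul_index (fun a => by simp), Finsupp.smul_sum]
  simp [mul_smul]

/-- `applL` as a linear map in the ensemble. -/
def applLhom (r : ℕ) : Ens X Y →ₗ[ℂ]
    ((⨂[ℂ] _ : Fin r, C(Y, ℂ)) →ₗ[ℂ] ⨂[ℂ] _ : Fin r, C(X, ℂ)) where
  toFun A := A.applL r
  map_add' A B := applL_add A B r
  map_smul' c A := applL_smul c A r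

theorem applL_sub (A B : Ens X Y) (r : ℕ) :
    (A - B).applL r = A.applL r - B.applL r :=
  map_sub (applLhom r) A B

theorem applL_finset_sum {α : Type*} (s : Finset α) (A : α → Ens X Y) (r : ℕ) :
    (∑ i ∈ s, A i).applL r = ∑ i ∈ s, (A i).applL r :=
  map_sum (applLhom r) A s

theorem applL_of_tprod (a : C(X, Y)) (r : ℕ) (f : Fin r → C(Y, ℂ)) :
    (Ens.of a).applL r (PiTensorProduct.tprod ℂ f) =
      PiTensorProduct.tprod ℂ (fun i => (f i).comp a) := by
  rw [applL_tprod, Ens.of, Finsupp.sum_single_index (by simp), one_smul]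

theorem applL_one (r : ℕ) : (Ens.one X).applL r = LinearMap.id := by
  apply PiTensorProduct.ext
  ext f
  have : Ens.one X = Ens.of (ContinuousMap.id X) := rfl
  simp [this, applL_of_tprod]

theorem applL_comp (B : Ens Y W) (A : Ens X Y) (r : ℕ) :
    (Ens.comp B A).applL r = (A.applL r).comp (B.applL r) := by
  apply PiTensorProduct.ext
  ext f
  simp only [LinearMap.compMultilinearMap_apply, LinearMap.comp_apply, applL_tprod]
  rw [Ens.comp, Finsupp.sum_sum_index (fun c => by simp) (fun c w w' => by rw [add_smul]),
    map_finsuppSum]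
  refine Finsupp.sum_congr fun b _ => ?_
  rw [Finsupp.sum_sum_index (fun c => by simp) (fun c w w' => by rw [add_smul]),
    LinearMap.map_smul, applL_tprod, Finsupp.smul_sum]
  refine Finsupp.sum_congr fun a _ => ?_
  rw [Finsupp.sum_single_index (by simp), smul_smul]
  simp [ContinuousMap.comp_assoc]

theorem applL_of_comp (b : C(Y, W)) (a : C(X, Y)) (r : ℕ) :
    (Ens.of (b.comp a)).applL r = ((Ens.of a).applL r).comp ((Ens.of b).applL r) := by
  apply PiTensorProduct.ext
  ext f
  simp [applL_of_tprod, ContinuousMap.comp_assoc]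

end Ens
namespace Ens

variable {X Y W : Type} [TopologicalSpace X] [TopologicalSpace Y] [TopologicalSpace W]

theorem applL_foldr (l : List (Ens X X)) (x : Ens X X) (r : ℕ) :
    ((l.foldr Ens.comp x).applL r) =
      (x.applL r).comp ((l.foldr Ens.comp (Ens.one X)).applL r) := by
  induction l with
  | nil => simp [applL_one]
  | cons e l ih =>
      simp only [List.foldr_cons, applL_comp, ih]
      rw [LinearMap.comp_assoc]

theorem applL_Z_zero' (r : ℕ) (p : ℕ → C(X, X)) : (Ens.Z p 0).applL r = LinearMap.id := by
  have : Ens.Z p 0 = Ens.one X := rfl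
  rw [this, applL_one]

theorem applL_Z_succ (r : ℕ) (p : ℕ → C(X, X)) (m : ℕ) :
    (Ens.Z p (m + 1)).applL r =
      ((Ens.one X - Ens.of (p (m + 1))).applL r).comp ((Ens.Z p m).applL r) := by
  rw [Ens.Z, List.range_succ, List.map_append, List.foldr_append]
  rw [applL_foldr]
  rw [← Ens.Z]
  congr 1
  simp only [List.map_cons, List.map_nil, List.foldr_cons, List.foldr_nil]
  rw [applL_comp, applL_one, LinearMap.id_comp]

end Ens
namespace Ens

variable {X Y W : Type} [TopologicalSpace X] [TopologicalSpace Y] [TopologicalSpace W]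

theorem applL_Z_eq_zero (r : ℕ) (p : ℕ → C(X, X))
    (hcomm : ∀ i j, (p i).comp (p j) = (p j).comp (p i))
    (hmov : ∀ i j, i ≠ j → Disjoint {x | p i x ≠ x} {x | p j x ≠ x})
    (n : ℕ) (hn : r < n) : (Ens.Z p n).applL r = 0 := by
  apply PiTensorProduct.ext
  ext f
  simp only [LinearMap.compMultilinearMap_apply, LinearMap.zero_apply,
    LinearMap.zero_comp]
  set g : Fin r → ℕ → C(X, ℂ) := fun j i => (f j).comp (p (i + 1)) - f j with hg
  set F : Finset ℕ → Fin r → C(X, ℂ) := fun S j => f j + ∑ i ∈ S, g j i with hF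
  have hgp : ∀ (j : Fin r) (i m : ℕ), i ≠ m → ∀ x : X, g j i (p (m + 1) x) = g j i x := by
    intro j i m him x
    by_cases hx : p (m + 1) x = x
    · rw [hx]
    · have h1 : p (i + 1) x = x := by
        by_contra h1
        exact (Set.disjoint_left.mp (hmov (i + 1) (m + 1) (by omega)) h1) hx
      have h2 : p (i + 1) (p (m + 1) x) = p (m + 1) x := by
        have := ContinuousMap.congr_fun (hcomm (i + 1) (m + 1)) x
        simpa [h1] using this
      simp [hg, h1, h2]
  have hFP : ∀ (S : Finset ℕ) (m : ℕ), S ⊆ Finset.range m → ∀ j : Fin r,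
      (F S j).comp (p (m + 1)) = F (insert m S) j := by
    intro S m hS j
    ext x
    have hmS : m ∉ S := fun h => by simpa using hS h
    simp only [ContinuousMap.comp_apply, hF, ContinuousMap.add_apply,
      ContinuousMap.sum_apply]
    rw [Finset.sum_insert hmS]
    rw [Finset.sum_congr rfl fun i hi =>
      hgp j i m (by have := Finset.mem_range.mp (hS hi); omega) x]
    have hfj : f j (p (m + 1) x) = f j x + g j m x := by simp [hg]
    rw [hfj]; ring
  have hB : ∀ m : ℕ, (Ens.Z p m).applL r (PiTensorProduct.tprod ℂ f) =
      ∑ S ∈ (Finset.range m).powerset,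
        ((-1 : ℂ)) ^ S.card • PiTensorProduct.tprod ℂ (F S) := by
    intro m
    induction m with
    | zero =>
        rw [applL_Z_zero']
        simp [hF]
    | succ m ih =>
        rw [applL_Z_succ, LinearMap.comp_apply, ih, map_sum]
        have hstep : ∀ S ∈ (Finset.range m).powerset,
            ((Ens.one X - Ens.of (p (m + 1))).applL r)
              ((-1 : ℂ) ^ S.card • PiTensorProduct.tprod ℂ (F S)) =
            (-1 : ℂ) ^ S.card • PiTensorProduct.tprod ℂ (F S) +
            (-1 : ℂ) ^ (insert m S).card • PiTensorProduct.tprod ℂ (F (insert m S)) := by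
          intro S hS
          have hmS : m ∉ S := fun h => by simpa using Finset.mem_powerset.mp hS h
          rw [applL_sub, applL_one, LinearMap.sub_apply, LinearMap.id_apply, map_smul,
            applL_of_tprod]
          rw [show (fun i => (F S i).comp (p (m + 1))) = F (insert m S) from
            funext (hFP S m (Finset.mem_powerset.mp hS))]
          rw [Finset.card_insert_of_notMem hmS, pow_succ]
          simp [sub_eq_add_neg, neg_smul]
        rw [Finset.sum_congr rfl hstep, Finset.sum_add_distrib]
        have hdisj : Disjoint (Finset.range m).powerset
            (Finset.image (insert m) (Finset.range m).powerset) := by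
          rw [Finset.disjoint_left]
          intro S hS hS'
          obtain ⟨T, _, rfl⟩ := Finset.mem_image.mp hS'
          have := Finset.mem_powerset.mp hS (Finset.mem_insert_self m T)
          simpa using this
        rw [Finset.range_add_one, Finset.powerset_insert, Finset.sum_union hdisj,
          Finset.sum_image ?hinj]
        case hinj =>
          intro S hS T hT hST
          have hmS : m ∉ S := fun h => by simpa using Finset.mem_powerset.mp hS h
          have hmT : m ∉ T := fun h => by simpa using Finset.mem_powerset.mp hT h
          have := congrArg (fun U : Finset ℕ => U.erase m) hST
          simpa [Finset.erase_insert hmS, Finset.erase_insert hmT] using this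
  rw [hB n]
  set G : Fin r → ℕ → C(X, ℂ) := fun j i => if i = n then f j else g j i with hG
  set t : (Fin r → ℕ) → (⨂[ℂ] _ : Fin r, C(X, ℂ)) :=
    fun c => PiTensorProduct.tprod ℂ (fun j => G j (c j)) with ht
  set big := Fintype.piFinset (fun _ : Fin r => insert n (Finset.range n)) with hbig
  have hexp : ∀ S ∈ (Finset.range n).powerset,
      PiTensorProduct.tprod ℂ (F S) =
        ∑ c ∈ Fintype.piFinset (fun _ : Fin r => insert n S), t c := by
    intro S hS
    have hnS : n ∉ S := fun h => by simpa using Finset.mem_powerset.mp hS h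
    have hFS : F S = fun j => ∑ i ∈ insert n S, G j i := by
      funext j
      rw [Finset.sum_insert hnS, hG]
      simp only [if_pos rfl, hF]
      congr 1
      refine Finset.sum_congr rfl fun i hi => ?_
      rw [if_neg (by rintro rfl; exact hnS hi)]
    rw [hFS]
    exact (PiTensorProduct.tprod ℂ).map_sum_finset _ _
  have hkey : ∀ S ∈ (Finset.range n).powerset,
      (-1 : ℂ) ^ S.card • PiTensorProduct.tprod ℂ (F S) =
      ∑ c ∈ big, (if c ∈ Fintype.piFinset (fun _ : Fin r => insert n S)
          then (-1 : ℂ) ^ S.card else 0) • t c := by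
    intro S hS
    rw [hexp S hS]
    rw [show (∑ c ∈ Fintype.piFinset (fun _ : Fin r => insert n S), t c) =
        ∑ c ∈ big, if c ∈ Fintype.piFinset (fun _ : Fin r => insert n S) then t c else 0 by
      rw [Finset.sum_ite_mem, Finset.inter_eq_right.mpr
        (Fintype.piFinset_subset _ _ fun a =>
          Finset.insert_subset_insert _ (Finset.mem_powerset.mp hS))]]
    rw [Finset.smul_sum]
    refine Finset.sum_congr rfl fun c _ => ?_
    split <;> simp
  rw [Finset.sum_congr rfl hkey, Finset.sum_comm]
  refine Finset.sum_eq_zero fun c hc => ?_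
  rw [← Finset.sum_smul]
  have hc' : ∀ j, c j ∈ insert n (Finset.range n) := Fintype.mem_piFinset.mp hc
  have hex : ∃ i0 ∈ Finset.range n, i0 ∉ Finset.image c Finset.univ := by
    by_contra hcon
    push_neg at hcon
    have h1 := Finset.card_le_card fun i hi => hcon i hi
    have h2 := Finset.card_image_le (s := Finset.univ) (f := c)
    simp only [Finset.card_range, Finset.card_univ, Fintype.card_fin] at h1 h2
    omega
  obtain ⟨i0, hi0r, hi0⟩ := hex
  have hci0 : ∀ j, c j ≠ i0 := fun j hj => hi0 (Finset.mem_image.mpr ⟨j, Finset.mem_univ j, hj⟩)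
  have hzero : (∑ S ∈ (Finset.range n).powerset,
      if c ∈ Fintype.piFinset (fun _ : Fin r => insert n S)
        then (-1 : ℂ) ^ S.card else 0) = 0 := by
    refine Finset.sum_involution
      (fun S _ => if i0 ∈ S then S.erase i0 else insert i0 S) ?_ ?_ ?_ ?_
    · intro S hS
      have hcond : ∀ S' : Finset ℕ, (S' = S.erase i0 ∨ S' = insert i0 S) →
          ((c ∈ Fintype.piFinset (fun _ : Fin r => insert n S)) ↔
           (c ∈ Fintype.piFinset (fun _ : Fin r => insert n S'))) := by
        intro S' hS'
        simp only [Fintype.mem_piFinset]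
        refine forall_congr' fun j => ?_
        simp only [Finset.mem_insert]
        rcases hS' with rfl | rfl
        · simp [Finset.mem_erase, hci0 j]
        · simp [Finset.mem_insert, hci0 j]
      by_cases hcc : c ∈ Fintype.piFinset (fun _ : Fin r => insert n S)
      · by_cases hi : i0 ∈ S
        · rw [if_pos hi, if_pos hcc, if_pos ((hcond _ (Or.inl rfl)).mp hcc)]
          have hcard : (S.erase i0).card + 1 = S.card := Finset.card_erase_add_one hi
          rw [← hcard, pow_succ]; ring
        · rw [if_neg hi, if_pos hcc, if_pos ((hcond _ (Or.inr rfl)).mp hcc)]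
          have hcard : (insert i0 S).card = S.card + 1 := Finset.card_insert_of_notMem hi
          rw [hcard, pow_succ]; ring
      · by_cases hi : i0 ∈ S
        · rw [if_pos hi, if_neg hcc, if_neg (fun h => hcc ((hcond _ (Or.inl rfl)).mpr h))]
          simp
        · rw [if_neg hi, if_neg hcc, if_neg (fun h => hcc ((hcond _ (Or.inr rfl)).mpr h))]
          simp
    · intro S hS hne
      by_cases hi : i0 ∈ S
      · rw [if_pos hi]
        intro h
        rw [← h] at hi
        exact (Finset.notMem_erase i0 S) hi
      · rw [if_neg hi]
        intro h
        rw [← h] at hi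
        exact hi (Finset.mem_insert_self i0 S)
    · intro S hS
      by_cases hi : i0 ∈ S
      · rw [if_pos hi]
        exact Finset.mem_powerset.mpr ((Finset.erase_subset _ _).trans (Finset.mem_powerset.mp hS))
      · rw [if_neg hi]
        exact Finset.mem_powerset.mpr (Finset.insert_subset hi0r (Finset.mem_powerset.mp hS))
    · intro S hS
      by_cases hi : i0 ∈ S
      · rw [if_pos hi]
        rw [if_neg (Finset.notMem_erase i0 S), Finset.insert_erase hi]
      · rw [if_neg hi]
        rw [if_pos (Finset.mem_insert_self i0 S), Finset.erase_insert hi]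
  rw [hzero, zero_smul]

end Ens
section OperatorAlgebra

variable {X Y W : Type} [TopologicalSpace X] [TopologicalSpace Y] [TopologicalSpace W]

private theorem sum_compL {α : Type*} {M N P : Type*} [AddCommGroup M] [AddCommGroup N]
    [AddCommGroup P] [Module ℂ M] [Module ℂ N] [Module ℂ P]
    (s : Finset α) (f : α → (N →ₗ[ℂ] P)) (g : M →ₗ[ℂ] N) :
    (∑ i ∈ s, f i).comp g = ∑ i ∈ s, (f i).comp g := by
  ext x; simp

private theorem compL_sum {α : Type*} {M N P : Type*} [AddCommGroup M] [AddCommGroup N]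
    [AddCommGroup P] [Module ℂ M] [Module ℂ N] [Module ℂ P]
    (s : Finset α) (f : N →ₗ[ℂ] P) (g : α → (M →ₗ[ℂ] N)) :
    f.comp (∑ i ∈ s, g i) = ∑ i ∈ s, f.comp (g i) := by
  ext x; simp

/-- The key invertibility computation: `Ψ_r ∘ Φ_r = id`. -/
theorem key_inv (PT : ProjTwist X Y) (r : ℕ) :
    ((Ens.T PT.q PT.h (r + 1)).applL r).comp ((Ens.T PT.p PT.hb (r + 1)).applL r) =
      LinearMap.id := by
  classical
  set P : ℕ → Module.End ℂ (⨂[ℂ] _ : Fin r, C(X, ℂ)) :=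
    fun i => (Ens.of (PT.p i)).applL r with hP
  set Q : ℕ → Module.End ℂ (⨂[ℂ] _ : Fin r, C(Y, ℂ)) :=
    fun i => (Ens.of (PT.q i)).applL r with hQ
  set zx : ℕ → Module.End ℂ (⨂[ℂ] _ : Fin r, C(X, ℂ)) :=
    fun m => (Ens.Z PT.p m).applL r with hzx
  set zy : ℕ → Module.End ℂ (⨂[ℂ] _ : Fin r, C(Y, ℂ)) :=
    fun m => (Ens.Z PT.q m).applL r with hzy
  set hh : ℕ → ((⨂[ℂ] _ : Fin r, C(Y, ℂ)) →ₗ[ℂ] ⨂[ℂ] _ : Fin r, C(X, ℂ)) :=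
    fun i => (Ens.of (PT.h i)).applL r with hhh
  set hb : ℕ → ((⨂[ℂ] _ : Fin r, C(X, ℂ)) →ₗ[ℂ] ⨂[ℂ] _ : Fin r, C(Y, ℂ)) :=
    fun i => (Ens.of (PT.hb i)).applL r with hhb
  -- basic multiplicative relations
  have mulPP : ∀ i j, P i * P j = (Ens.of ((PT.p j).comp (PT.p i))).applL r := by
    intro i j
    rw [Ens.applL_of_comp, Module.End.mul_eq_comp]
  have hPP : ∀ i j, P i * P j = P j * P i := by
    intro i j
    rw [mulPP i j, mulPP j i, PT.p_comm]
  have hPidem : ∀ i, P i * P i = P i := by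
    intro i
    rw [mulPP i i, PT.p_idem]
  have hzx0 : zx 0 = 1 := Ens.applL_Z_zero' r PT.p
  have hzxS : ∀ m, zx (m + 1) = (1 - P (m + 1)) * zx m := by
    intro m
    rw [hzx]
    dsimp only
    rw [Ens.applL_Z_succ, Ens.applL_sub, Ens.applL_one]
    rfl
  have hzyS : ∀ m, zy (m + 1) = (1 - Q (m + 1)) * zy m := by
    intro m
    rw [hzy]
    dsimp only
    rw [Ens.applL_Z_succ, Ens.applL_sub, Ens.applL_one]
    rfl
  have hCPzx : ∀ i m, Commute (P i) (zx m) := by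
    intro i m
    induction m with
    | zero => rw [hzx0]; exact Commute.one_right _
    | succ m ih =>
        rw [hzxS m]
        exact Commute.mul_right ((Commute.one_right _).sub_right (hPP i (m + 1))) ih
  have hkill : ∀ m i, i < m → P (i + 1) * zx m = 0 := by
    intro m
    induction m with
    | zero => intro i h; omega
    | succ m ih =>
        intro i h
        rw [hzxS m, ← mul_assoc]
        by_cases hi : i = m
        · subst hi
          have : P (i + 1) * (1 - P (i + 1)) = 0 := by
            rw [mul_sub, mul_one, hPidem, sub_self]
          rw [this, zero_mul]
        · have hlt : i < m := by omega
          have hc : P (i + 1) * (1 - P (m + 1)) = (1 - P (m + 1)) * P (i + 1) := by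
            rw [mul_sub, sub_mul, mul_one, one_mul, hPP]
          rw [hc, mul_assoc, ih i hlt, mul_zero]
  have hzxidem : ∀ m, zx m * zx m = zx m := by
    intro m
    induction m with
    | zero => rw [hzx0, one_mul]
    | succ m ih =>
        rw [hzxS m]
        have hc : Commute (zx m) (1 - P (m + 1)) :=
          (Commute.one_right (zx m)).sub_right (hCPzx (m + 1) m).symm
        rw [hc.mul_mul_mul_comm, ih]
        have hsq : (1 - P (m + 1)) * (1 - P (m + 1)) = 1 - P (m + 1) := by
          rw [sub_mul, one_mul, mul_sub, mul_one, hPidem, sub_self, sub_zero]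
        rw [hsq]
  have htel : ∀ n, ∑ i ∈ Finset.range n, P (i + 1) * zx i = 1 - zx n := by
    intro n
    induction n with
    | zero => simp [hzx0]
    | succ n ih =>
        rw [Finset.sum_range_succ, ih, hzxS n, sub_mul, one_mul]
        abel
  -- mixed relations
  have hQhb : ∀ i j, (Q j).comp (hb i) = (hb i).comp (P j) := by
    intro i j
    have h1 := Ens.applL_of_comp (PT.p j) (PT.hb i) r
    have h2 := Ens.applL_of_comp (PT.hb i) (PT.q j) r
    rw [PT.phb i j] at h1
    rw [h2] at h1
    exact h1
  have hzyhb : ∀ m i, (zy m).comp (hb i) = (hb i).comp (zx m) := by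
    intro m i
    induction m with
    | zero =>
        rw [hzx0, hzy]
        dsimp only
        rw [Ens.applL_Z_zero']
        rfl
    | succ m ih =>
        rw [hzyS m, hzxS m, Module.End.mul_eq_comp, Module.End.mul_eq_comp,
          LinearMap.comp_assoc, ih, ← LinearMap.comp_assoc, ← LinearMap.comp_assoc]
        congr 1
        simp only [LinearMap.comp_sub, LinearMap.sub_comp, hQhb i (m + 1),
          Module.End.one_eq_id, LinearMap.id_comp, LinearMap.comp_id]
  have hhhbP : ∀ i j, (hh i).comp (hb j) = P i * P j := by
    intro i j
    have h1 := Ens.applL_of_comp (PT.hb j) (PT.h i) r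
    have h2 := Ens.applL_of_comp (PT.p j) (PT.p i) r
    rw [PT.hbh i j] at h1
    rw [h2] at h1
    rw [Module.End.mul_eq_comp]
    exact h1.symm
  -- expand the two T's
  have hTX : (Ens.T PT.p PT.hb (r + 1)).applL r =
      ∑ j ∈ Finset.range (r + 1), (hb (j + 1)).comp (zx j) := by
    rw [Ens.T, Ens.applL_finset_sum]
    exact Finset.sum_congr rfl fun j _ => Ens.applL_comp _ _ r
  have hTY : (Ens.T PT.q PT.h (r + 1)).applL r =
      ∑ i ∈ Finset.range (r + 1), (hh (i + 1)).comp (zy i) := by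
    rw [Ens.T, Ens.applL_finset_sum]
    exact Finset.sum_congr rfl fun i _ => Ens.applL_comp _ _ r
  rw [hTX, hTY, sum_compL]
  have hterm : ∀ i ∈ Finset.range (r + 1),
      ((hh (i + 1)).comp (zy i)).comp (∑ j ∈ Finset.range (r + 1), (hb (j + 1)).comp (zx j)) =
      P (i + 1) * zx i := by
    intro i _
    rw [compL_sum]
    have hij : ∀ j ∈ Finset.range (r + 1),
        ((hh (i + 1)).comp (zy i)).comp ((hb (j + 1)).comp (zx j)) =
        (P (i + 1) * P (j + 1)) * (zx i * zx j) := by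
      intro j _
      calc ((hh (i + 1)).comp (zy i)).comp ((hb (j + 1)).comp (zx j))
          = (hh (i + 1)).comp (((zy i).comp (hb (j + 1))).comp (zx j)) := by
            rw [LinearMap.comp_assoc, LinearMap.comp_assoc]
        _ = (hh (i + 1)).comp (((hb (j + 1)).comp (zx i)).comp (zx j)) := by rw [hzyhb]
        _ = ((hh (i + 1)).comp (hb (j + 1))).comp ((zx i).comp (zx j)) := by
            rw [LinearMap.comp_assoc, LinearMap.comp_assoc]
        _ = (P (i + 1) * P (j + 1)) * (zx i * zx j) := by
            rw [hhhbP, Module.End.mul_eq_comp, Module.End.mul_eq_comp, Module.End.mul_eq_comp]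
    rw [Finset.sum_congr rfl hij]
    have hoff : ∀ j ∈ Finset.range (r + 1), j ≠ i →
        (P (i + 1) * P (j + 1)) * (zx i * zx j) = 0 := by
      intro j _ hji
      rcases Nat.lt_or_ge j i with hlt | hge
      · -- j < i : P (j+1) * zx i = 0
        have h0 : P (j + 1) * zx i = 0 := hkill i j hlt
        calc (P (i + 1) * P (j + 1)) * (zx i * zx j)
            = P (i + 1) * ((P (j + 1) * zx i) * zx j) := by
              rw [mul_assoc, mul_assoc]
          _ = 0 := by rw [h0, zero_mul, mul_zero]
      · have hlt : i < j := by omega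
        have h0 : P (i + 1) * zx j = 0 := hkill j i hlt
        have hc1 := (hCPzx (i + 1) i).eq
        calc P (i + 1) * P (j + 1) * (zx i * zx j)
            = P (j + 1) * P (i + 1) * (zx i * zx j) := by rw [hPP (i + 1) (j + 1)]
          _ = P (j + 1) * (P (i + 1) * zx i * zx j) := by
              rw [mul_assoc (P (j + 1)) (P (i + 1)), ← mul_assoc (P (i + 1)) (zx i) (zx j)]
          _ = P (j + 1) * (zx i * (P (i + 1) * zx j)) := by
              rw [hc1, mul_assoc (zx i)]
          _ = 0 := by rw [h0, mul_zero, mul_zero]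
    rw [Finset.sum_eq_single_of_mem i (by assumption) hoff, hPidem, hzxidem]
  rw [Finset.sum_congr rfl hterm, htel (r + 1)]
  have hz0 : zx (r + 1) = 0 := Ens.applL_Z_eq_zero r PT.p PT.p_comm PT.p_mov (r + 1) (by omega)
  rw [hz0, sub_zero]
  rfl

end OperatorAlgebra
section Naturality

variable {X Y W : Type} [TopologicalSpace X] [TopologicalSpace Y] [TopologicalSpace W]

theorem lodayL_tprod {r s : ℕ} (σ : Fin r → Fin s) (B : Type) [CommRing B] [Algebra ℂ B]
    [TopologicalSpace B] (f : Fin r → B) :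
    lodayL B σ (PiTensorProduct.tprod ℂ f) =
      PiTensorProduct.tprod ℂ
        (fun j => ∏ i ∈ Finset.univ.filter (fun i => σ i = j), f i) := by
  rw [lodayL, PiTensorProduct.lift.tprod]
  rfl

/-- Naturality of `applL` with respect to the Loday structure maps. -/
theorem applL_loday (A : Ens X Y) (r s : ℕ) (σ : Fin r → Fin s) :
    (lodayL C(X, ℂ) σ).comp (A.applL r) = (A.applL s).comp (lodayL C(Y, ℂ) σ) := by
  apply PiTensorProduct.ext
  ext f
  simp only [LinearMap.compMultilinearMap_apply, LinearMap.comp_apply]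
  rw [Ens.applL_tprod A r f, map_finsuppSum, lodayL_tprod σ C(Y, ℂ) f, Ens.applL_tprod]
  refine Finsupp.sum_congr fun a _ => ?_
  rw [map_smul]
  congr 1
  rw [lodayL_tprod]
  congr 1
  funext j
  exact (map_prod (ContinuousMap.compRightAlgHom ℂ ℂ a) f
    (Finset.univ.filter (fun i => σ i = j))).symm

/-- Stability of `applL_s (T_{n})` for `n ≥ s + 1`. -/
theorem applL_T_stable (q : ℕ → C(Y, Y)) (h : ℕ → C(X, Y))
    (hcomm : ∀ i j, (q i).comp (q j) = (q j).comp (q i))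
    (hmov : ∀ i j, i ≠ j → Disjoint {y | q i y ≠ y} {y | q j y ≠ y})
    (s r : ℕ) (hsr : s ≤ r) :
    (Ens.T q h (r + 1)).applL s = (Ens.T q h (s + 1)).applL s := by
  rw [Ens.T, Ens.T, Ens.applL_finset_sum, Ens.applL_finset_sum]
  symm
  refine Finset.sum_subset (by intro x hx; simp at hx ⊢; omega) ?_
  intro i _ his
  have hsi : s < i := by simp at his; omega
  rw [Ens.applL_comp, Ens.applL_Z_eq_zero s q hcomm hmov i hsi, LinearMap.comp_zero]

end Naturality

/-- Swapping the roles of `X` and `Y` in a system of projections and twists. -/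
def ProjTwist.swap {X Y : Type} [TopologicalSpace X] [TopologicalSpace Y]
    (PT : ProjTwist X Y) : ProjTwist Y X where
  p := PT.q
  q := PT.p
  h := PT.hb
  hb := PT.h
  p_idem := PT.q_idem
  p_comm := PT.q_comm
  q_idem := PT.p_idem
  q_comm := PT.p_comm
  p_mov := PT.q_mov
  q_mov := PT.p_mov
  qh := PT.phb
  phb := PT.qh
  hbh := fun i j => PT.hhb j i
  hhb := fun i j => PT.hbh j i

/-- If `X` and `Y` are connected by projections and twists, then the Loday
functors `𝓛_{C(X)}` and `𝓛_{C(Y)}` are isomorphic: the maps `Φ_r = T̄_{r+1}^{(r)}` and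
`Ψ_r = T_{r+1}^{(r)}` are mutually inverse and natural with respect to every surjection
`σ : ⟨r⟩ → ⟨s⟩`. -/
theorem loday_functors_isomorphic {X Y : Type} [TopologicalSpace X] [TopologicalSpace Y]
    (PT : ProjTwist X Y)
    (Φ : ∀ r : ℕ, (⨂[ℂ] _ : Fin r, C(X, ℂ)) →ₗ[ℂ] ⨂[ℂ] _ : Fin r, C(Y, ℂ))
    (Ψ : ∀ r : ℕ, (⨂[ℂ] _ : Fin r, C(Y, ℂ)) →ₗ[ℂ] ⨂[ℂ] _ : Fin r, C(X, ℂ))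
    (hΦ : ∀ r, Φ r = (Ens.T PT.p PT.hb (r + 1)).applL r)
    (hΨ : ∀ r, Ψ r = (Ens.T PT.q PT.h (r + 1)).applL r) :
    (∀ r, (Ψ r).comp (Φ r) = LinearMap.id ∧ (Φ r).comp (Ψ r) = LinearMap.id) ∧
    (∀ (r s : ℕ) (σ : Fin r → Fin s), Function.Surjective σ →
      (lodayL C(Y, ℂ) σ).comp (Φ r) = (Φ s).comp (lodayL C(X, ℂ) σ) ∧
      (lodayL C(X, ℂ) σ).comp (Ψ r) = (Ψ s).comp (lodayL C(Y, ℂ) σ)) := by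
  
  constructor
  · intro r
    constructor
    · rw [hΨ r, hΦ r]
      exact key_inv PT r
    · rw [hΨ r, hΦ r]
      exact key_inv PT.swap r
  · intro r s σ hσ
    have hsr : s ≤ r := by
      have := Fintype.card_le_of_surjective σ hσ
      simpa using this
    constructor
    · rw [hΦ r, hΦ s, applL_loday (Ens.T PT.p PT.hb (r + 1)) r s σ,
        applL_T_stable PT.p PT.hb PT.p_comm PT.p_mov s r hsr]
    · rw [hΨ r, hΨ s, applL_loday (Ens.T PT.q PT.h (r + 1)) r s σ,
        applL_T_stable PT.q PT.h PT.q_comm PT.q_mov s r hsr]
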